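/- Let (𝒜, ℬ) be a cotorsion pair in a Grothendieck category 𝒢 cogenerated by a set {A_i}, with a generator G ∈ 𝒜. Then the induced cotorsion pair (dg-𝒜, ℬ̃) on chain complexes is cogenerated by the set { Sⁿ(G) : n ∈ ℤ } ∪ { Sⁿ(A_i) : n ∈ ℤ, i ∈ I }. -/

import Mathlib

open CategoryTheory Limits

universe v u

/-- `Ext¹(A, B) = 0`, expressed by the splitting of every short exact sequence
`0 → B → T → A → 0`. -/
def Ext1IsZero {C : Type*} [Category C] [Abelian C] (A B : C) : Prop :=
  ∀ (T : C) (k : B ⟶ T) (r : T ⟶ A) (w : k ≫ r = 0),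
    Mono k → Epi r → (ShortComplex.mk k r w).Exact → ∃ s : A ⟶ T, s ≫ r = 𝟙 A

/-- The sphere complex `Sⁿ(A)`: the chain complex with `A` concentrated in degree `n`. -/
noncomputable def sphere {𝒢 : Type u} [Category.{v} 𝒢] [Abelian 𝒢] (n : ℤ) (A : 𝒢) :
    ChainComplex 𝒢 ℤ :=
  (HomologicalComplex.single 𝒢 (ComplexShape.down ℤ) n).obj A

namespace Stmt7

variable {𝒢 : Type u} [Category.{v} 𝒢] [Abelian 𝒢]


/-- If every map from a separator lifts along `f`, then `f` is epi. -/
lemma epi_of_sep_lift {G : 𝒢} (hG : IsSeparator G) {P Q : 𝒢} (f : P ⟶ Q)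
    (h : ∀ g : G ⟶ Q, ∃ u : G ⟶ P, u ≫ f = g) : Epi f := by
  apply Abelian.epi_of_cokernel_π_eq_zero
  apply hG.def
  intro g
  obtain ⟨u, hu⟩ := h g
  rw [← hu, Category.assoc, cokernel.condition, comp_zero, comp_zero]

/-- If `π : W ⟶ Q` is a cokernel of `g`, then `pushout.desc 0 π` is a
cokernel of `pushout.inl f g`. -/
noncomputable def cokernelPushoutInl {Z XX W Q : 𝒢} (f : Z ⟶ XX) (g : Z ⟶ W)
    (π : W ⟶ Q) (hπ : g ≫ π = 0) (h : IsColimit (CokernelCofork.ofπ π hπ)) :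
    IsColimit (CokernelCofork.ofπ
      (pushout.desc (0 : XX ⟶ Q) π (by rw [comp_zero, hπ]))
      (show pushout.inl f g ≫ _ = 0 by simp [pushout.inl_desc])) := by
  have hπepi : Epi π := epi_of_isColimit_cofork h
  refine CokernelCofork.IsColimit.ofπ _ _
    (fun {Z'} g' hg' => (CokernelCofork.IsColimit.desc' h (pushout.inr f g ≫ g')
      (by rw [← pushout.condition_assoc, hg', comp_zero])).1)
    (fun {Z'} g' hg' => ?_) (fun {Z'} g' hg' m hm => ?_)
  · apply pushout.hom_ext
    · simp [hg', pushout.inl_desc_assoc]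
    · simpa [pushout.inr_desc_assoc] using (CokernelCofork.IsColimit.desc' h (pushout.inr f g ≫ g')
        (by rw [← pushout.condition_assoc, hg', comp_zero])).2
  · have h1 : π ≫ m = pushout.inr f g ≫ g' := by
      calc π ≫ m
          = (pushout.inr f g ≫ pushout.desc (0 : XX ⟶ Q) π (by rw [comp_zero, hπ])) ≫ m := by
            rw [pushout.inr_desc]
        _ = pushout.inr f g ≫ g' := by rw [Category.assoc, hm]
    rw [← cancel_epi π, h1]
    exact ((CokernelCofork.IsColimit.desc' h (pushout.inr f g ≫ g')
      (by rw [← pushout.condition_assoc, hg', comp_zero])).2).symm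

/-- If `π : XX ⟶ Q` is a cokernel of `f`, then `pushout.desc π 0` is a
cokernel of `pushout.inr f g`. -/
noncomputable def cokernelPushoutInr {Z XX W Q : 𝒢} (f : Z ⟶ XX) (g : Z ⟶ W)
    (π : XX ⟶ Q) (hπ : f ≫ π = 0) (h : IsColimit (CokernelCofork.ofπ π hπ)) :
    IsColimit (CokernelCofork.ofπ
      (pushout.desc π (0 : W ⟶ Q) (by rw [comp_zero, hπ]))
      (show pushout.inr f g ≫ _ = 0 by simp [pushout.inr_desc])) := by
  have hπepi : Epi π := epi_of_isColimit_cofork h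
  refine CokernelCofork.IsColimit.ofπ _ _
    (fun {Z'} g' hg' => (CokernelCofork.IsColimit.desc' h (pushout.inl f g ≫ g')
      (by rw [pushout.condition_assoc, hg', comp_zero])).1)
    (fun {Z'} g' hg' => ?_) (fun {Z'} g' hg' m hm => ?_)
  · apply pushout.hom_ext
    · simpa [pushout.inl_desc_assoc] using (CokernelCofork.IsColimit.desc' h (pushout.inl f g ≫ g')
        (by rw [pushout.condition_assoc, hg', comp_zero])).2
    · simp [hg', pushout.inr_desc_assoc]
  · have h1 : π ≫ m = pushout.inl f g ≫ g' := by
      calc π ≫ m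
          = (pushout.inl f g ≫ pushout.desc π (0 : W ⟶ Q) (by rw [comp_zero, hπ])) ≫ m := by
            rw [pushout.inl_desc]
        _ = pushout.inl f g ≫ g' := by rw [Category.assoc, hm]
    rw [← cancel_epi π, h1]
    exact ((CokernelCofork.IsColimit.desc' h (pushout.inl f g ≫ g')
      (by rw [pushout.condition_assoc, hg', comp_zero])).2).symm

/-- The coimage factorization is mono: if `i` is a kernel of `d`, `π` a cokernel of `i`
and `π ≫ dbar = d`, then `dbar` is mono. -/
lemma mono_coimage_factor {Z P Q R : 𝒢} (i : Z ⟶ P) (π : P ⟶ Q) (d : P ⟶ R) (dbar : Q ⟶ R)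
    (hfac : π ≫ dbar = d) (hi : i ≫ d = 0) (hπ : i ≫ π = 0)
    (hker : IsLimit (KernelFork.ofι i hi))
    (hcoker : IsColimit (CokernelCofork.ofπ π hπ)) : Mono dbar := by
  have hπepi : Epi π := epi_of_isColimit_cofork hcoker
  apply Abelian.mono_of_kernel_ι_eq_zero
  have h1 : Epi (pullback.fst (kernel.ι dbar) π) := inferInstance
  rw [← cancel_epi (pullback.fst (kernel.ι dbar) π)]
  have h2 : (pullback.snd (kernel.ι dbar) π) ≫ d = 0 := by
    rw [← hfac, ← pullback.condition_assoc, kernel.condition, comp_zero]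
  obtain ⟨v, hv⟩ := KernelFork.IsLimit.lift' hker (pullback.snd (kernel.ι dbar) π) h2
  simp only [Fork.ι_ofι] at hv
  rw [comp_zero, pullback.condition, ← hv, Category.assoc, hπ, comp_zero]


variable (X : ChainComplex 𝒢 ℤ) (n : ℤ) (W : 𝒢)
  (α : X.X n ⟶ W) (β : W ⟶ X.X (n - 1))

noncomputable def modX : ℤ → 𝒢 := fun m => if m = n then W else X.X m

noncomputable def modXIsoN : modX X n W n ≅ W := eqToIso (if_pos rfl)

noncomputable def modXIso (m : ℤ) (h : m ≠ n) : modX X n W m ≅ X.X m := eqToIso (if_neg h)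

noncomputable def modd : ∀ i j : ℤ, modX X n W i ⟶ modX X n W j := fun i j =>
  if hi : i = n then
    (if hj : j = n - 1 then
      eqToHom (congrArg (modX X n W) hi) ≫ (modXIsoN X n W).hom ≫ β ≫
        (modXIso X n W (n-1) (by omega)).inv ≫ eqToHom (congrArg (modX X n W) hj.symm)
    else 0)
  else if hj : j = n then
    (modXIso X n W i hi).hom ≫ X.d i n ≫ α ≫ (modXIsoN X n W).inv ≫
      eqToHom (congrArg (modX X n W) hj.symm)
  else
    (modXIso X n W i hi).hom ≫ X.d i j ≫ (modXIso X n W j hj).inv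

lemma modd_n : modd X n W α β n (n-1) =
    (modXIsoN X n W).hom ≫ β ≫ (modXIso X n W (n-1) (by omega)).inv := by
  rw [modd, dif_pos rfl, dif_pos rfl]
  simp

lemma modd_n_other (j : ℤ) (hj : j ≠ n - 1) : modd X n W α β n j = 0 := by
  rw [modd, dif_pos rfl, dif_neg hj]

lemma modd_to_n (i : ℤ) (hi : i ≠ n) : modd X n W α β i n =
    (modXIso X n W i hi).hom ≫ X.d i n ≫ α ≫ (modXIsoN X n W).inv := by
  rw [modd, dif_neg hi, dif_pos rfl]
  simp

lemma modd_other (i j : ℤ) (hi : i ≠ n) (hj : j ≠ n) : modd X n W α β i j =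
    (modXIso X n W i hi).hom ≫ X.d i j ≫ (modXIso X n W j hj).inv := by
  rw [modd, dif_neg hi, dif_neg hj]

variable (hαβ : α ≫ β = X.d n (n - 1)) (hβ : β ≫ X.d (n - 1) (n - 2) = 0)

@[reducible] noncomputable def modT : ChainComplex 𝒢 ℤ where
  X := modX X n W
  d := modd X n W α β
  shape i j hij := by
    simp only [ComplexShape.down_Rel] at hij
    by_cases hi : i = n
    · subst hi
      exact modd_n_other X _ W α β j (by omega)
    · by_cases hj : j = n
      · subst hj
        rw [modd_to_n X _ W α β i hi, X.shape i _ (by simpa using hij)]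
        simp
      · rw [modd_other X _ W α β i j hi hj, X.shape i j (by simpa using hij)]
        simp
  d_comp_d' i j k hij hjk := by
    simp only [ComplexShape.down_Rel] at hij hjk
    by_cases hi : i = n
    · have hj : j = n - 1 := by omega
      have hk : k = n - 2 := by omega
      subst hj; subst hk; subst hi
      rw [modd_n, modd_other X _ W α β _ _ (by omega) (by omega)]
      simp only [Category.assoc, Iso.inv_hom_id_assoc]
      simp [reassoc_of% hβ]
    · by_cases hj : j = n
      · have hk : k = n - 1 := by omega
        subst hk; subst hj
        rw [modd_to_n X _ W α β i hi, modd_n]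
        simp only [Category.assoc, Iso.inv_hom_id_assoc]
        rw [reassoc_of% hαβ]
        simp
      · by_cases hk : k = n
        · subst hk
          rw [modd_other X _ W α β i j hi hj, modd_to_n X _ W α β j hj]
          simp only [Category.assoc, Iso.inv_hom_id_assoc]
          rw [X.d_comp_d_assoc]
          simp
        · rw [modd_other X _ W α β i j hi hj, modd_other X _ W α β j k hj hk]
          simp only [Category.assoc, Iso.inv_hom_id_assoc]
          rw [X.d_comp_d_assoc]
          simp

@[simp] lemma modT_d (i j : ℤ) :
    (modT X n W α β hαβ hβ).d i j = modd X n W α β i j := rfl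

/-- The canonical inclusion `X ⟶ modT`. -/
noncomputable def modk : X ⟶ modT X n W α β hαβ hβ where
  f m := if h : m = n then
      (X.XIsoOfEq h).hom ≫ α ≫ (modXIsoN X n W).inv ≫ eqToHom (congrArg (modX X n W) h.symm)
    else (modXIso X n W m h).inv
  comm' i j hij := by
    simp only [ComplexShape.down_Rel] at hij

    by_cases hi : i = n
    · have hj : j = n - 1 := by omega
      subst hj
      obtain rfl : n = i := hi.symm
      rw [dif_pos rfl, dif_neg (show n - 1 ≠ n by omega)]
      simp only [HomologicalComplex.XIsoOfEq_rfl, Iso.refl_hom, Category.id_comp,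
        eqToHom_refl, Category.comp_id, modT_d, modd_n]
      simp only [Category.assoc, Iso.inv_hom_id_assoc]
      rw [reassoc_of% hαβ]
    · by_cases hj : j = n
      · obtain rfl : n = j := hj.symm
        rw [dif_neg hi, dif_pos rfl]
        simp only [HomologicalComplex.XIsoOfEq_rfl, Iso.refl_hom, Category.id_comp,
          eqToHom_refl, Category.comp_id, modT_d, modd_to_n X n W α β i hi]
        simp
      · rw [dif_neg hi, dif_neg hj]
        rw [modT_d, modd_other X n W α β i j hi hj]
        simp

lemma modk_f_n : (modk X n W α β hαβ hβ).f n = α ≫ (modXIsoN X n W).inv := by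
  show (if h : n = n then _ else _) = _
  rw [dif_pos rfl]
  simp

lemma modk_f_ne (m : ℤ) (h : m ≠ n) :
    (modk X n W α β hαβ hβ).f m = (modXIso X n W m h).inv := by
  show (if h : m = n then _ else _) = _
  rw [dif_neg h]

/-- The projection `modT ⟶ Sⁿ(A₀)`. -/
noncomputable def modr {A₀ : 𝒢} (ρ : W ⟶ A₀) (hαρ : α ≫ ρ = 0) :
    modT X n W α β hαβ hβ ⟶
    (HomologicalComplex.single 𝒢 (ComplexShape.down ℤ) n).obj A₀ where
  f m := if h : m = n then
      eqToHom (congrArg (modX X n W) h) ≫ (modXIsoN X n W).hom ≫ ρ ≫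
        (HomologicalComplex.singleObjXIsoOfEq (ComplexShape.down ℤ) n A₀ m h).inv
    else 0
  comm' i j hij := by
    simp only [ComplexShape.down_Rel] at hij

    by_cases hj : j = n
    · obtain rfl : n = j := hj.symm
      rw [dif_pos rfl]
      by_cases hi : i = n
      · obtain rfl : n = i := hi.symm
        rw [dif_pos rfl]
        simp only [modT_d, modd_n_other X n W α β n (by omega), zero_comp]
        simp
      · rw [dif_neg hi]
        simp only [modT_d, modd_to_n X n W α β i hi]
        simp only [eqToHom_refl, Category.id_comp, Category.assoc, Iso.inv_hom_id_assoc]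
        rw [reassoc_of% hαρ]
        simp
    · rw [dif_neg hj]
      simp

lemma modr_f_n {A₀ : 𝒢} (ρ : W ⟶ A₀) (hαρ : α ≫ ρ = 0) :
    (modr X n W α β hαβ hβ ρ hαρ).f n = (modXIsoN X n W).hom ≫ ρ ≫
    (HomologicalComplex.singleObjXSelf (ComplexShape.down ℤ) n A₀).inv := by
  show (if h : n = n then _ else _) = _
  rw [dif_pos rfl]
  simp [HomologicalComplex.singleObjXSelf]

lemma modr_f_ne {A₀ : 𝒢} (ρ : W ⟶ A₀) (hαρ : α ≫ ρ = 0) (m : ℤ) (h : m ≠ n) :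
    (modr X n W α β hαβ hβ ρ hαρ).f m = 0 := by
  show (if h : m = n then _ else _) = _
  rw [dif_neg h]

lemma modk_modr {A₀ : 𝒢} (ρ : W ⟶ A₀) (hαρ : α ≫ ρ = 0) :
    modk X n W α β hαβ hβ ≫ modr X n W α β hαβ hβ ρ hαρ = 0 := by
  apply HomologicalComplex.to_single_hom_ext
  rw [HomologicalComplex.comp_f, modk_f_n, modr_f_n]
  simp only [Category.assoc, Iso.inv_hom_id_assoc]
  rw [reassoc_of% hαρ]
  simp

/-- The short complex `X ⟶ modT ⟶ Sⁿ(A₀)` is short exact. -/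
lemma modSES {A₀ : 𝒢} (ρ : W ⟶ A₀) (hαρ : α ≫ ρ = 0)
    (hmono : Mono α) (hρcoker : IsColimit (CokernelCofork.ofπ ρ hαρ)) :
    (ShortComplex.mk _ _ (modk_modr X n W α β hαβ hβ ρ hαρ)).ShortExact := by
  have hρepi : Epi ρ := epi_of_isColimit_cofork hρcoker
  apply HomologicalComplex.shortExact_of_degreewise_shortExact
  intro m
  by_cases hm : m = n
  · obtain rfl : n = m := hm.symm
    refine ShortComplex.shortExact_of_iso
      (S₁ := ShortComplex.mk α ρ hαρ) (ShortComplex.isoMk (Iso.refl _).symm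
        (modXIsoN X n W).symm
        (HomologicalComplex.singleObjXSelf (ComplexShape.down ℤ) n A₀).symm ?_ ?_) ?_
    · dsimp
      show 𝟙 _ ≫ (modk X n W α β hαβ hβ).f n = _
      rw [modk_f_n]
      simp
      rfl
    · dsimp
      show _ ≫ (modr X n W α β hαβ hβ ρ hαρ).f n = _
      rw [modr_f_n]
      simp
      rfl
    · exact { exact := ShortComplex.exact_of_g_is_cokernel _ hρcoker,
              mono_f := hmono, epi_g := hρepi }
  · have hzero : IsZero (((HomologicalComplex.single 𝒢 (ComplexShape.down ℤ) n).obj A₀).X m) :=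
      HomologicalComplex.isZero_single_obj_X _ _ _ _ hm
    have hg0 : (modr X n W α β hαβ hβ ρ hαρ).f m = 0 := hzero.eq_of_tgt _ _
    refine { exact := ?_, mono_f := ?_, epi_g := ?_ }
    · rw [ShortComplex.exact_iff_epi _ (show _ = (0 : _) from hg0)]
      show Epi ((modk X n W α β hαβ hβ).f m)
      rw [modk_f_ne X n W α β hαβ hβ m hm]
      infer_instance
    · show Mono ((modk X n W α β hαβ hβ).f m)
      rw [modk_f_ne X n W α β hαβ hβ m hm]
      infer_instance
    · show Epi ((modr X n W α β hαβ hβ ρ hαρ).f m)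
      exact ⟨fun u v _ => hzero.eq_of_src u v⟩

include hαβ hβ in
/-- The key splitting extraction. -/
lemma gadget {A₀ : 𝒢} (ρ : W ⟶ A₀) (hαρ : α ≫ ρ = 0)
    (hmono : Mono α) (hρcoker : IsColimit (CokernelCofork.ofπ ρ hαρ))
    (hext : Ext1IsZero ((HomologicalComplex.single 𝒢 (ComplexShape.down ℤ) n).obj A₀) X) :
    ∃ σ : A₀ ⟶ W, σ ≫ ρ = 𝟙 A₀ ∧ σ ≫ β = 0 := by
  have hSE := modSES X n W α β hαβ hβ ρ hαρ hmono hρcoker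
  obtain ⟨s, hs⟩ := hext (modT X n W α β hαβ hβ) (modk X n W α β hαβ hβ)
    (modr X n W α β hαβ hβ ρ hαρ) (modk_modr X n W α β hαβ hβ ρ hαρ)
    hSE.mono_f hSE.epi_g hSE.exact
  refine ⟨(HomologicalComplex.singleObjXSelf (ComplexShape.down ℤ) n A₀).inv ≫ s.f n ≫
    (modXIsoN X n W).hom, ?_, ?_⟩
  · have h1 := congrArg (fun φ => HomologicalComplex.Hom.f φ n) hs
    simp only [HomologicalComplex.comp_f, HomologicalComplex.id_f] at h1
    have h2 : s.f n ≫ (modXIsoN X n W).hom ≫ ρ =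
        (HomologicalComplex.singleObjXSelf (ComplexShape.down ℤ) n A₀).hom := by
      have h1' : s.f n ≫ (modr X n W α β hαβ hβ ρ hαρ).f n = 𝟙 _ := h1
      rw [modr_f_n] at h1'
      rw [← cancel_mono ((HomologicalComplex.singleObjXSelf (ComplexShape.down ℤ) n A₀)).inv]
      simpa using h1'
    rw [Category.assoc, Category.assoc, h2]
    simp
  · have h3 := s.comm n (n-1)
    rw [modT_d, modd_n] at h3
    simp only [HomologicalComplex.single_obj_d, zero_comp] at h3
    have h4 : s.f n ≫ (modXIsoN X n W).hom ≫ β = 0 := by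
      rw [← cancel_mono ((modXIso X n W (n-1) (by omega))).inv]
      simpa using h3
    simp only [Category.assoc]
    rw [h4, comp_zero]

/-- If `X` is exact at `n-1` and `Ext¹(A₀, Zₙ X) = 0`, then `Ext¹(Sⁿ(A₀), X) = 0`. -/
lemma splitLemma (X : ChainComplex 𝒢 ℤ) (n : ℤ) {A₀ : 𝒢}
    (hexa : X.ExactAt (n-1)) (hB : Ext1IsZero A₀ (X.cycles n)) :
    Ext1IsZero ((HomologicalComplex.single 𝒢 (ComplexShape.down ℤ) n).obj A₀) X := by
  intro T k r w hmono hepi hexact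
  have hSE : (ShortComplex.mk k r w).ShortExact :=
    { exact := hexact, mono_f := hmono, epi_g := hepi }
  have hdeg := (HomologicalComplex.shortExact_iff_degreewise_shortExact _).mp hSE
  set e := HomologicalComplex.singleObjCyclesSelfIso (ComplexShape.down ℤ) n A₀ with he
  set κ := HomologicalComplex.cyclesMap k n with hκ
  set ρ' := HomologicalComplex.cyclesMap r n ≫ e.hom with hρ'
  haveI hkm : Mono (k.f n) := (hdeg n).mono_f
  haveI hkm' : Mono (k.f (n-1)) := (hdeg (n-1)).mono_f
  haveI hκm : Mono κ := by
    rw [hκ]; infer_instance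
  -- epi of ρ'
  have hrel1 : (ComplexShape.down ℤ).Rel (n+1) n := by simp
  haveI hπS : IsIso (((HomologicalComplex.single 𝒢 (ComplexShape.down ℤ) n).obj A₀).homologyπ n) :=
    HomologicalComplex.isIso_homologyπ _ (n+1) n ((ComplexShape.down ℤ).prev_eq' hrel1)
      (HomologicalComplex.single_obj_d _ _ _ _ _)
  haveI hHr : Epi (HomologicalComplex.homologyMap r n) := by
    have hox := hSE.homology_exact₃ n (n-1) (by simp)
    have hz : IsZero (X.homology (n-1)) :=
      (X.exactAt_iff_isZero_homology (n-1)).mp hexa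
    exact hox.epi_f (hz.eq_of_tgt _ _)
  haveI hρ'epi : Epi ρ' := by
    have h5 : HomologicalComplex.cyclesMap r n =
        (T.homologyπ n ≫ HomologicalComplex.homologyMap r n) ≫
          inv (((HomologicalComplex.single 𝒢 (ComplexShape.down ℤ) n).obj A₀).homologyπ n) := by
      rw [IsIso.eq_comp_inv]
      exact (HomologicalComplex.homologyπ_naturality r n).symm
    rw [hρ', h5]
    infer_instance
  have w' : κ ≫ ρ' = 0 := by
    rw [hκ, hρ', ← Category.assoc, ← HomologicalComplex.cyclesMap_comp, w,
      HomologicalComplex.cyclesMap_zero, zero_comp]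
  -- κ is a kernel of ρ'
  have key : ∀ (Q : 𝒢) (q : Q ⟶ T.cycles n), q ≫ ρ' = 0 →
      ∃ l : Q ⟶ X.cycles n, l ≫ κ = q := by
    intro Q q hq
    have hq1 : q ≫ HomologicalComplex.cyclesMap r n = 0 := by
      rw [← cancel_mono e.hom, Category.assoc, ← hρ', hq, zero_comp]
    have hq2 : (q ≫ T.iCycles n) ≫ r.f n = 0 := by
      rw [Category.assoc, ← HomologicalComplex.cyclesMap_i r n, ← Category.assoc, hq1, zero_comp]
    haveI : Mono ((ShortComplex.mk k r w).map
        (HomologicalComplex.eval 𝒢 (ComplexShape.down ℤ) n)).f := (hdeg n).mono_f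
    have hu1 : (hdeg n).exact.lift (q ≫ T.iCycles n) hq2 ≫ k.f n = q ≫ T.iCycles n :=
      (hdeg n).exact.lift_f _ _
    have hu2 : (hdeg n).exact.lift (q ≫ T.iCycles n) hq2 ≫ X.d n (n-1) = 0 := by
      erw [← cancel_mono (k.f (n-1)), Category.assoc,
        ← HomologicalComplex.Hom.comm k n (n-1), ← Category.assoc, hu1,
        Category.assoc, HomologicalComplex.iCycles_d, comp_zero, zero_comp]
    refine ⟨X.liftCycles ((hdeg n).exact.lift (q ≫ T.iCycles n) hq2) (n-1)
      ((ComplexShape.down ℤ).next_eq' (by simp)) hu2, ?_⟩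
    erw [← cancel_mono (T.iCycles n), Category.assoc, hκ,
      HomologicalComplex.cyclesMap_i k n, ← Category.assoc,
      HomologicalComplex.liftCycles_i, hu1]
  have hkernel : IsLimit (KernelFork.ofι κ w') :=
    KernelFork.IsLimit.ofι _ _ (fun {Q} q hq => (key Q q hq).choose)
      (fun {Q} q hq => (key Q q hq).choose_spec)
      (fun {Q} q hq m hm => by rw [← cancel_mono κ, hm, (key Q q hq).choose_spec])
  obtain ⟨σ, hσ⟩ := hB (T.cycles n) κ ρ' w' hκm hρ'epi
    (ShortComplex.exact_of_f_is_kernel _ hkernel)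
  refine ⟨HomologicalComplex.mkHomFromSingle (σ ≫ T.iCycles n)
    (fun k' hk' => by simp), ?_⟩
  apply HomologicalComplex.from_single_hom_ext
  rw [HomologicalComplex.comp_f, HomologicalComplex.mkHomFromSingle_f, HomologicalComplex.id_f]
  have h6 : σ ≫ HomologicalComplex.cyclesMap r n ≫
      ((HomologicalComplex.single 𝒢 (ComplexShape.down ℤ) n).obj A₀).iCycles n =
      (HomologicalComplex.singleObjXSelf (ComplexShape.down ℤ) n A₀).inv := by
    rw [← cancel_mono (HomologicalComplex.singleObjXSelf (ComplexShape.down ℤ) n A₀).hom]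
    simp only [Category.assoc, Iso.inv_hom_id]
    rw [← HomologicalComplex.singleObjCyclesSelfIso_hom, ← he]
    simpa using hσ
  simp only [Category.assoc]
  rw [← HomologicalComplex.cyclesMap_i r n, h6, Iso.hom_inv_id]

/-- Exactness of `X` from `Ext¹(Sᵐ(G), X) = 0` for all `m`, `G` a separator. -/
lemma exact_of_ext (X : ChainComplex 𝒢 ℤ) {G : 𝒢} (hGsep : IsSeparator G)
    (hext : ∀ m : ℤ, Ext1IsZero
      ((HomologicalComplex.single 𝒢 (ComplexShape.down ℤ) m).obj G) X) (n : ℤ) :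
    X.ExactAt n := by
  suffices key : ∀ m : ℤ, X.ExactAt (m - 1) by simpa using key (n+1)
  intro m
  rw [X.exactAt_iff' m (m-1) (m-2) ((ComplexShape.down ℤ).prev_eq' (by simp))
    ((ComplexShape.down ℤ).next_eq' (by simp only [ComplexShape.down_Rel]; omega)), ShortComplex.exact_iff_epi_toCycles]
  apply epi_of_sep_lift hGsep
  intro g
  set gn : G ⟶ X.X (m-1) := g ≫ (X.sc' m (m-1) (m-2)).iCycles with hgn
  have hgd : gn ≫ X.d (m-1) (m-2) = 0 := by
    erw [hgn, Category.assoc]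
    rw [show X.d (m-1) (m-2) = (X.sc' m (m-1) (m-2)).g from rfl]
    erw [(X.sc' m (m-1) (m-2)).iCycles_g, comp_zero]
  obtain ⟨σ, hσ1, hσ2⟩ := gadget X m (X.X m ⊞ G) biprod.inl
    (biprod.desc (X.d m (m-1)) gn) (by simp)
    (by apply biprod.hom_ext' <;> simp [hgd]) biprod.snd (by simp)
    inferInstance (biprod.isCokernelInlCokernelFork _ _) (hext m)
  refine ⟨-(σ ≫ biprod.fst), ?_⟩
  have h7 : σ ≫ biprod.fst ≫ X.d m (m-1) + gn = 0 := by
    have h8 : σ ≫ biprod.desc (X.d m (m-1)) gn =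
        σ ≫ biprod.fst ≫ X.d m (m-1) + gn := by
      rw [biprod.desc_eq, Preadditive.comp_add, ← Category.assoc, ← Category.assoc,
        Category.assoc σ biprod.fst, hσ1, Category.id_comp]
    rw [← h8, hσ2]
  erw [← cancel_mono (X.sc' m (m-1) (m-2)).iCycles, Category.assoc,
    ShortComplex.toCycles_i]
  erw [show (X.sc' m (m-1) (m-2)).f = X.d m (m-1) from rfl, ← hgn]
  erw [Preadditive.neg_comp, Category.assoc, neg_eq_iff_add_eq_zero]
  exact h7

/-- `Ext¹(Aᵢ, Zₙ X) = 0` from `Ext¹(Sⁿ(Aᵢ), X) = 0`. -/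
lemma cycles_ext (X : ChainComplex 𝒢 ℤ) (n : ℤ) {Ai : 𝒢}
    (hext : Ext1IsZero
      ((HomologicalComplex.single 𝒢 (ComplexShape.down ℤ) n).obj Ai) X) :
    Ext1IsZero Ai (X.cycles n) := by
  intro Wob kW πW w hmono hepi hexact
  haveI := hmono
  haveI := hepi
  have cond1 : X.iCycles n ≫ X.d n (n-1) = kW ≫ (0 : Wob ⟶ X.X (n-1)) := by simp
  have cond2 : X.iCycles n ≫ (0 : X.X n ⟶ Ai) = kW ≫ πW := by simp [w]
  obtain ⟨σ, hσ1, hσ2⟩ := gadget X n (pushout (X.iCycles n) kW) (pushout.inl _ _)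
    (pushout.desc (X.d n (n-1)) 0 cond1) (by simp [pushout.inl_desc])
    (by apply pushout.hom_ext <;> simp [pushout.inl_desc_assoc, pushout.inr_desc_assoc]) (pushout.desc 0 πW cond2) (by simp [pushout.inl_desc])
    inferInstance
    (cokernelPushoutInl (X.iCycles n) kW πW w hexact.gIsCokernel) hext
  -- `pushout.inr` is the kernel of `δ`
  have cond3 : X.iCycles n ≫ cokernel.π (X.iCycles n) =
      kW ≫ (0 : Wob ⟶ cokernel (X.iCycles n)) := by simp
  set δ := pushout.desc (cokernel.π (X.iCycles n)) 0 cond3 with hδ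
  have hδcoker : IsColimit (CokernelCofork.ofπ δ
      (show pushout.inr (X.iCycles n) kW ≫ δ = 0 by simp [hδ, pushout.inr_desc])) :=
    cokernelPushoutInr (X.iCycles n) kW (cokernel.π _) (cokernel.condition _)
      (cokernelIsCokernel _)
  have hdbar : Mono (cokernel.desc (X.iCycles n) (X.d n (n-1)) (X.iCycles_d n (n-1))) :=
    mono_coimage_factor (X.iCycles n) (cokernel.π _) (X.d n (n-1)) _
      (cokernel.π_desc _ _ _) (X.iCycles_d n (n-1)) (cokernel.condition _)
      (X.cyclesIsKernel n (n-1) ((ComplexShape.down ℤ).next_eq' (by simp)))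
      (cokernelIsCokernel _)
  have hβδ : pushout.desc (X.d n (n-1)) 0 cond1 =
      δ ≫ cokernel.desc (X.iCycles n) (X.d n (n-1)) (X.iCycles_d n (n-1)) := by
    apply pushout.hom_ext <;> simp [hδ, pushout.inl_desc, pushout.inr_desc, pushout.inl_desc_assoc, pushout.inr_desc_assoc]
  have hσδ : σ ≫ δ = 0 := by
    rw [← cancel_mono (cokernel.desc (X.iCycles n) (X.d n (n-1)) (X.iCycles_d n (n-1))),
      Category.assoc, ← hβδ, hσ2, zero_comp]
  have hinrker := Abelian.monoIsKernelOfCokernel _ hδcoker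
  obtain ⟨τ, hτ⟩ := KernelFork.IsLimit.lift' hinrker σ hσδ
  simp only [Fork.ι_ofι] at hτ
  refine ⟨τ, ?_⟩
  have h10 : pushout.inr (X.iCycles n) kW ≫ pushout.desc 0 πW cond2 = πW :=
    pushout.inr_desc _ _ _
  rw [← h10, ← Category.assoc, hτ, hσ1]

end Stmt7

/-- Let `(𝒜, ℬ)` be a cotorsion pair in a Grothendieck category `𝒢`
cogenerated by a set `{A i}` and with a generator `G ∈ 𝒜`.  Then the induced cotorsion
pair `(dg-𝒜, ℬ̃)` on chain complexes is cogenerated by the spheres `Sⁿ(G)` and `Sⁿ(A i)`;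
i.e. a complex `X` lies in `ℬ̃` (it is exact with all cycles in `ℬ`) if and only if
`Ext¹` of every such sphere into `X` vanishes. -/
theorem stmt7 {𝒢 : Type u} [Category.{v} 𝒢] [Abelian 𝒢] [HasColimits 𝒢] [AB5 𝒢]
    (𝒜 ℬ : Set 𝒢)
    (hpair : (∀ X : 𝒢, X ∈ 𝒜 ↔ ∀ B ∈ ℬ, Ext1IsZero X B) ∧
      (∀ Y : 𝒢, Y ∈ ℬ ↔ ∀ A ∈ 𝒜, Ext1IsZero A Y))
    {ι : Type v} (A : ι → 𝒢) (hcog : ∀ Y : 𝒢, Y ∈ ℬ ↔ ∀ i, Ext1IsZero (A i) Y)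
    (G : 𝒢) (hGsep : IsSeparator G) (hG : G ∈ 𝒜) (X : ChainComplex 𝒢 ℤ) :
    ((∀ n : ℤ, Ext1IsZero (sphere n G) X) ∧
        ∀ (n : ℤ) (i : ι), Ext1IsZero (sphere n (A i)) X) ↔
      ((∀ n : ℤ, X.ExactAt n) ∧ ∀ n : ℤ, X.cycles n ∈ ℬ) := by
  constructor
  · rintro ⟨hG', hA'⟩
    constructor
    · intro n
      exact Stmt7.exact_of_ext X hGsep (fun m => hG' m) n
    · intro n
      rw [hcog]
      intro i
      exact Stmt7.cycles_ext X n (hA' n i)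
  · rintro ⟨hexa, hcyc⟩
    constructor
    · intro n
      exact Stmt7.splitLemma X n (hexa (n-1)) ((hpair.2 (X.cycles n)).mp (hcyc n) G hG)
    · intro n i
      exact Stmt7.splitLemma X n (hexa (n-1)) ((hcog (X.cycles n)).mp (hcyc n) i)
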